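/- Let f = (1/n)Σ fᵢ with each fᵢ twice differentiable and λI ⪯ ∇²f_S ⪯ ΛI for every subsample S, let w* minimize f, and let g = ∇f_S(x) − ∇f_S(w) + ∇f(w) where S is sampled uniformly. Then E‖g‖² ≤ 4Λ(f(x) − f(w*)) + 4(Λ−λ)(f(w) − f(w*)). -/

import Mathlib

open Finset
open scoped RealInnerProductSpace

section OneDim

/-- 1-D Taylor-type bound from a second-derivative upper bound. -/
lemma svrg_taylor1d {g g' g'' : ℝ → ℝ} (hg : ∀ t, HasDerivAt g (g' t) t)
    (hg' : ∀ t, HasDerivAt g' (g'' t) t) {C : ℝ} (hC : ∀ t, g'' t ≤ C) :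
    g 1 ≤ g 0 + g' 0 + C / 2 := by
  set h : ℝ → ℝ := fun t => g 0 + t * g' 0 + C * t ^ 2 / 2 - g t with hh
  set h' : ℝ → ℝ := fun t => g' 0 + C * t - g' t with hh'
  have hd : ∀ t, HasDerivAt h (h' t) t := by
    intro t
    have h1 : HasDerivAt (fun t : ℝ => g 0 + t * g' 0 + C * t ^ 2 / 2) (g' 0 + C * t) t := by
      have ha : HasDerivAt (fun t : ℝ => t * g' 0) (g' 0) t := by
        simpa using (hasDerivAt_id t).mul_const (g' 0)
      have hb : HasDerivAt (fun t : ℝ => C * t ^ 2 / 2) (C * t) t := by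
        have := ((hasDerivAt_pow 2 t).const_mul C).div_const 2
        exact this.congr_deriv (by rw [show (2:ℕ) - 1 = 1 from rfl]; push_cast; ring)
      exact (ha.const_add (g 0)).add hb
    exact h1.sub (hg t)
  have hd' : ∀ t, HasDerivAt h' (C - g'' t) t := by
    intro t
    have h1 : HasDerivAt (fun t : ℝ => g' 0 + C * t) C t := by
      simpa using ((hasDerivAt_id t).const_mul C).const_add (g' 0)
    exact h1.sub (hg' t)
  have hmono' : Monotone h' := by
    apply monotone_of_deriv_nonneg
    · exact fun t => (hd' t).differentiableAt
    · intro t; rw [(hd' t).deriv]; linarith [hC t]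
  have hnn : ∀ t ∈ Set.Ioo (0:ℝ) 1, 0 ≤ deriv h t := by
    intro t ht
    rw [(hd t).deriv]
    have : h' 0 ≤ h' t := hmono' (le_of_lt ht.1)
    have h0 : h' 0 = 0 := by simp [hh']
    linarith
  have hmono : MonotoneOn h (Set.Icc (0:ℝ) 1) := by
    apply monotoneOn_of_deriv_nonneg (convex_Icc 0 1)
    · exact Continuous.continuousOn (by
        have : Differentiable ℝ h := fun t => (hd t).differentiableAt
        exact this.continuous)
    · intro t _; exact ((hd t).differentiableAt).differentiableWithinAt
    · intro t ht
      rw [interior_Icc] at ht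
      exact hnn t ht
  have h01 : h 0 ≤ h 1 := hmono (by norm_num) (by norm_num) (by norm_num)
  have h0 : h 0 = 0 := by simp [hh]
  have h1 : h 1 = g 0 + g' 0 + C / 2 - g 1 := by norm_num [hh]
  rw [h0, h1] at h01; linarith

end OneDim

section VectorCalc

variable {E : Type*} [NormedAddCommGroup E] [InnerProductSpace ℝ E] [CompleteSpace E]

lemma svrg_lineDeriv (ψ : E → ℝ) (hψ : Differentiable ℝ ψ) (x u : E) (t : ℝ) :
    HasDerivAt (fun t : ℝ => ψ (x + t • u)) (fderiv ℝ ψ (x + t • u) u) t := by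
  have hline : HasDerivAt (fun t : ℝ => x + t • u) u t := by
    simpa using ((hasDerivAt_id t).smul_const u).const_add x
  exact (hψ (x + t • u)).hasFDerivAt.comp_hasDerivAt t hline

lemma svrg_fderiv_apply_diff (φ : E → ℝ) (hφ : ContDiff ℝ 2 φ) (v : E) :
    Differentiable ℝ (fun y => fderiv ℝ φ y v) := by
  have h2 : ContDiff ℝ 1 (fderiv ℝ φ) := hφ.fderiv_right (by norm_num)
  exact fun y => ((ContinuousLinearMap.apply ℝ ℝ v).differentiable.comp
    (h2.differentiable (by norm_num))) y

lemma svrg_quadUpper (φ : E → ℝ) (hφ : ContDiff ℝ 2 φ) {L : ℝ}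
    (hup : ∀ z v, fderiv ℝ (fun y => fderiv ℝ φ y v) z v ≤ L * ‖v‖ ^ 2) (x u : E) :
    φ (x + u) ≤ φ x + fderiv ℝ φ x u + L * ‖u‖ ^ 2 / 2 := by
  have hφ1 : Differentiable ℝ φ := hφ.differentiable (by norm_num)
  have hkey := svrg_taylor1d (g := fun t : ℝ => φ (x + t • u))
    (g' := fun t : ℝ => fderiv ℝ φ (x + t • u) u)
    (g'' := fun t : ℝ => fderiv ℝ (fun y => fderiv ℝ φ y u) (x + t • u) u)
    (svrg_lineDeriv φ hφ1 x u)
    (svrg_lineDeriv _ (svrg_fderiv_apply_diff φ hφ u) x u)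
    (C := L * ‖u‖ ^ 2) (fun t => hup _ u)
  simpa using hkey

lemma svrg_quadLower (φ : E → ℝ) (hφ : ContDiff ℝ 2 φ) {m : ℝ}
    (hlow : ∀ z v, m * ‖v‖ ^ 2 ≤ fderiv ℝ (fun y => fderiv ℝ φ y v) z v) (x u : E) :
    φ x + fderiv ℝ φ x u + m * ‖u‖ ^ 2 / 2 ≤ φ (x + u) := by
  have hφ1 : Differentiable ℝ φ := hφ.differentiable (by norm_num)
  have hkey := svrg_taylor1d (g := fun t : ℝ => -φ (x + t • u))
    (g' := fun t : ℝ => -(fderiv ℝ φ (x + t • u) u))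
    (g'' := fun t : ℝ => -(fderiv ℝ (fun y => fderiv ℝ φ y u) (x + t • u) u))
    (fun t => (svrg_lineDeriv φ hφ1 x u t).neg)
    (fun t => (svrg_lineDeriv _ (svrg_fderiv_apply_diff φ hφ u) x u t).neg)
    (C := -(m * ‖u‖ ^ 2)) (fun t => by have := hlow (x + t • u) u; linarith)
  simp only [zero_smul, add_zero, one_smul] at hkey
  linarith

lemma svrg_grad_inner (φ : E → ℝ) (z v : E) :
    ⟪gradient φ z, v⟫ = fderiv ℝ φ z v :=
  InnerProductSpace.toDual_symm_apply

lemma svrg_cocoercive (φ : E → ℝ) (hφ : ContDiff ℝ 2 φ) {m L : ℝ} (hm : 0 ≤ m) (hmL : m ≤ L)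
    (hh : ∀ z v, m * ‖v‖ ^ 2 ≤ fderiv ℝ (fun y => fderiv ℝ φ y v) z v ∧
      fderiv ℝ (fun y => fderiv ℝ φ y v) z v ≤ L * ‖v‖ ^ 2) (x y : E) :
    ‖gradient φ x - gradient φ y‖ ^ 2
      ≤ 2 * L * (φ x - φ y - ⟪gradient φ y, x - y⟫) := by
  set G := gradient φ x - gradient φ y with hG
  set D := φ x - φ y - ⟪gradient φ y, x - y⟫ with hD
  have key : ∀ t : ℝ, t * ‖G‖ ^ 2 ≤ D + L * t ^ 2 * ‖G‖ ^ 2 / 2 := by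
    intro t
    have hupper := svrg_quadUpper φ hφ (fun z v => (hh z v).2) x (-(t • G))
    have hlower := svrg_quadLower φ hφ (fun z v => (hh z v).1) y (x + -(t • G) - y)
    rw [add_sub_cancel] at hlower
    have hnu : ‖-(t • G)‖ ^ 2 = t ^ 2 * ‖G‖ ^ 2 := by
      rw [norm_neg, norm_smul, mul_pow, Real.norm_eq_abs, sq_abs]
    have hfx : fderiv ℝ φ x (-(t • G)) = -(t * ⟪gradient φ x, G⟫) := by
      rw [← svrg_grad_inner φ x]
      simp [inner_neg_right, real_inner_smul_right]
    have hfy : fderiv ℝ φ y (x + -(t • G) - y) =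
        ⟪gradient φ y, x - y⟫ - t * ⟪gradient φ y, G⟫ := by
      rw [← svrg_grad_inner φ y]
      have : x + -(t • G) - y = (x - y) + -(t • G) := by abel
      rw [this, inner_add_right]
      simp only [inner_neg_right, real_inner_smul_right]
      ring
    have hGsq : ⟪gradient φ x, G⟫ - ⟪gradient φ y, G⟫ = ‖G‖ ^ 2 := by
      rw [← inner_sub_left, ← hG, real_inner_self_eq_norm_sq]
    have hmnn : 0 ≤ m * ‖x + -(t • G) - y‖ ^ 2 / 2 :=
      div_nonneg (mul_nonneg hm (sq_nonneg _)) two_pos.le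
    rw [hnu] at hupper
    rw [hfx] at hupper
    rw [hfy] at hlower
    have h3 : t * ⟪gradient φ x, G⟫ - t * ⟪gradient φ y, G⟫ = t * ‖G‖ ^ 2 := by
      rw [← mul_sub, hGsq]
    rw [hD]
    linarith [hupper, hlower, hmnn, h3]
  have hD0 : 0 ≤ D := by have := key 0; simpa using this
  have hL0 : 0 ≤ L := le_trans hm hmL
  rcases eq_or_lt_of_le hL0 with hL | hL
  · -- L = 0
    have hGz : ‖G‖ ^ 2 ≤ 0 := by
      by_contra hpos
      push_neg at hpos
      have h1 := key ((D + 1) / ‖G‖ ^ 2)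
      rw [div_mul_cancel₀ _ (ne_of_gt hpos)] at h1
      rw [← hL] at h1
      simp at h1
      linarith
    calc ‖G‖ ^ 2 ≤ 0 := hGz
    _ ≤ 2 * L * D := by rw [← hL]; simp
  · have h1 := key (1 / L)
    have hL' : L ≠ 0 := ne_of_gt hL
    have h2 : (1 / L) * ‖G‖ ^ 2 - L * (1 / L) ^ 2 * ‖G‖ ^ 2 / 2 = ‖G‖ ^ 2 / (2 * L) := by
      field_simp; ring
    have h3 : ‖G‖ ^ 2 / (2 * L) ≤ D := by linarith
    have h4 : ‖G‖ ^ 2 ≤ D * (2 * L) := (div_le_iff₀ (by positivity)).mp h3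
    linarith [h4]

lemma svrg_shift_fderiv (φ : E → ℝ) (hφ : Differentiable ℝ φ) (c : ℝ) (z v : E) :
    fderiv ℝ (fun y => φ y - c / 2 * ‖y‖ ^ 2) z v = fderiv ℝ φ z v - c * ⟪z, v⟫ := by
  have hB : HasFDerivAt (fun y : E => c / 2 * ‖y‖ ^ 2) ((c / 2) • (2 • (innerSL ℝ z))) z :=
    ((hasStrictFDerivAt_norm_sq z).hasFDerivAt).const_mul (c / 2)
  have h := ((hφ z).hasFDerivAt.sub hB).fderiv
  rw [show (fun y => φ y - c / 2 * ‖y‖ ^ 2) = (φ - fun y => c / 2 * ‖y‖ ^ 2) from rfl, h]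
  simp only [ContinuousLinearMap.coe_sub', Pi.sub_apply, ContinuousLinearMap.coe_smul',
    Pi.smul_apply, innerSL_apply_apply, smul_eq_mul]
  ring

lemma svrg_shift_contDiff (φ : E → ℝ) (hφ : ContDiff ℝ 2 φ) (c : ℝ) :
    ContDiff ℝ 2 (fun y => φ y - c / 2 * ‖y‖ ^ 2) :=
  hφ.sub (contDiff_const.mul (contDiff_norm_sq ℝ))

lemma svrg_shift_grad (φ : E → ℝ) (hφ : Differentiable ℝ φ) (c : ℝ) (z : E) :
    gradient (fun y => φ y - c / 2 * ‖y‖ ^ 2) z = gradient φ z - c • z := by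
  apply ext_inner_right ℝ
  intro v
  rw [svrg_grad_inner, svrg_shift_fderiv φ hφ c z v, inner_sub_left, real_inner_smul_left,
    svrg_grad_inner]

lemma svrg_shift_hess (φ : E → ℝ) (hφ : ContDiff ℝ 2 φ) (c : ℝ) (z v : E) :
    fderiv ℝ (fun y => fderiv ℝ (fun y' => φ y' - c / 2 * ‖y'‖ ^ 2) y v) z v
      = fderiv ℝ (fun y => fderiv ℝ φ y v) z v - c * ‖v‖ ^ 2 := by
  have hφ1 : Differentiable ℝ φ := hφ.differentiable (by norm_num)
  have hfun : (fun y => fderiv ℝ (fun y' => φ y' - c / 2 * ‖y'‖ ^ 2) y v)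
      = fun y => fderiv ℝ φ y v - c * ⟪v, y⟫ := by
    funext y
    rw [svrg_shift_fderiv φ hφ1 c y v, real_inner_comm]
  rw [hfun]
  have hD1 : DifferentiableAt ℝ (fun y => fderiv ℝ φ y v) z :=
    svrg_fderiv_apply_diff φ hφ v z
  have hD2 : HasFDerivAt (fun y : E => c * ⟪v, y⟫) (c • (innerSL ℝ v)) z :=
    ((innerSL ℝ v).hasFDerivAt).const_mul c
  rw [fderiv_fun_sub hD1 hD2.differentiableAt]
  simp only [ContinuousLinearMap.coe_sub', Pi.sub_apply]
  rw [hD2.fderiv]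
  simp only [ContinuousLinearMap.coe_smul', Pi.smul_apply, innerSL_apply_apply, smul_eq_mul,
    real_inner_self_eq_norm_sq]

lemma svrg_grad_smul_sum {ι : Type*} (T : Finset ι) (f : ι → E → ℝ)
    (hf : ∀ i, Differentiable ℝ (f i)) (c : ℝ) (y : E) :
    gradient (fun z => c • ∑ i ∈ T, f i z) y = c • ∑ i ∈ T, gradient (f i) y := by
  have hsum : HasFDerivAt (fun z => ∑ i ∈ T, f i z) (∑ i ∈ T, fderiv ℝ (f i) y) y :=
    HasFDerivAt.fun_sum fun i _ => (hf i y).hasFDerivAt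
  have h : HasFDerivAt (fun z => c • ∑ i ∈ T, f i z) (c • ∑ i ∈ T, fderiv ℝ (f i) y) y :=
    hsum.const_smul c
  unfold gradient
  rw [h.fderiv, map_smul, map_sum]

end VectorCalc

section Comb

lemma svrg_card_containing {n s : ℕ} (hs : 0 < s) (i : Fin n) :
    ((Finset.univ.filter fun S : Finset (Fin n) => S.card = s).filter
      (fun S => i ∈ S)).card = (n - 1).choose (s - 1) := by
  have hcard : (Finset.powersetCard (s - 1) (Finset.univ.erase i)).card
      = (n - 1).choose (s - 1) := by
    rw [Finset.card_powersetCard, Finset.card_erase_of_mem (Finset.mem_univ i),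
      Finset.card_univ, Fintype.card_fin]
  rw [← hcard]
  refine Finset.card_bij' (fun S _ => S.erase i) (fun T _ => insert i T) ?hi ?hj ?li ?ri
  case hi =>
    intro S hS
    simp only [Finset.mem_filter, Finset.mem_univ, true_and] at hS
    rw [Finset.mem_powersetCard]
    constructor
    · intro j hj
      rw [Finset.mem_erase] at hj ⊢
      exact ⟨hj.1, Finset.mem_univ j⟩
    · rw [Finset.card_erase_of_mem hS.2, hS.1]
  case hj =>
    intro T hT
    rw [Finset.mem_powersetCard] at hT
    have hiT : i ∉ T := fun h => (Finset.mem_erase.mp (hT.1 h)).1 rfl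
    simp only [Finset.mem_filter, Finset.mem_univ, true_and]
    refine ⟨?_, Finset.mem_insert_self i T⟩
    rw [Finset.card_insert_of_notMem hiT, hT.2]
    omega
  case li =>
    intro S hS
    simp only [Finset.mem_filter] at hS
    exact Finset.insert_erase hS.2
  case ri =>
    intro T hT
    rw [Finset.mem_powersetCard] at hT
    have hiT : i ∉ T := fun h => (Finset.mem_erase.mp (hT.1 h)).1 rfl
    exact Finset.erase_insert hiT

lemma svrg_sum_subsets {M : Type*} [AddCommMonoid M] {n s : ℕ} (hs : 0 < s) (v : Fin n → M) :
    ∑ S ∈ Finset.univ.filter (fun S : Finset (Fin n) => S.card = s), ∑ i ∈ S, v i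
      = ((n - 1).choose (s - 1)) • ∑ i, v i := by
  calc ∑ S ∈ Finset.univ.filter (fun S : Finset (Fin n) => S.card = s), ∑ i ∈ S, v i
      = ∑ S ∈ Finset.univ.filter (fun S : Finset (Fin n) => S.card = s),
          ∑ i : Fin n, if i ∈ S then v i else 0 := by
        refine Finset.sum_congr rfl fun S _ => ?_
        rw [Finset.sum_ite_mem, Finset.univ_inter]
    _ = ∑ i : Fin n, ∑ S ∈ Finset.univ.filter (fun S : Finset (Fin n) => S.card = s),
          if i ∈ S then v i else 0 := Finset.sum_comm
    _ = ∑ i : Fin n, ((n - 1).choose (s - 1)) • v i := by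
        refine Finset.sum_congr rfl fun i _ => ?_
        rw [← Finset.sum_filter, Finset.sum_const, svrg_card_containing hs i]
    _ = ((n - 1).choose (s - 1)) • ∑ i, v i := (Finset.smul_sum).symm

end Comb

section Var

variable {E : Type*} [NormedAddCommGroup E] [InnerProductSpace ℝ E]

open scoped RealInnerProductSpace in
lemma svrg_var_le {ι : Type*} (F : Finset ι) (c : ι → E) (μ : E)
    (h : ∑ S ∈ F, c S = (F.card : ℝ) • μ) :
    ∑ S ∈ F, ‖c S - μ‖ ^ 2 ≤ ∑ S ∈ F, ‖c S‖ ^ 2 := by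
  have hexp : ∑ S ∈ F, ‖c S - μ‖ ^ 2
      = ∑ S ∈ F, ‖c S‖ ^ 2 - (F.card : ℝ) * ‖μ‖ ^ 2 := by
    have h1 : ∀ S, ‖c S - μ‖ ^ 2 = ‖c S‖ ^ 2 - 2 * ⟪c S, μ⟫ + ‖μ‖ ^ 2 :=
      fun S => norm_sub_sq_real (c S) μ
    rw [Finset.sum_congr rfl fun S _ => h1 S]
    rw [Finset.sum_add_distrib, Finset.sum_sub_distrib, Finset.sum_const, ← Finset.mul_sum,
      ← sum_inner, h, real_inner_smul_left, real_inner_self_eq_norm_sq, nsmul_eq_mul]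
    ring
  rw [hexp]
  have : 0 ≤ (F.card : ℝ) * ‖μ‖ ^ 2 := by positivity
  linarith

end Var

lemma svrg_card_filter {n s : ℕ} :
    (Finset.univ.filter fun S : Finset (Fin n) => S.card = s).card = n.choose s := by
  rw [← Finset.powerset_univ, ← Finset.powersetCard_eq_filter, Finset.card_powersetCard,
    Finset.card_univ, Fintype.card_fin]

lemma svrg_choose_id {n s : ℕ} (hs : 0 < s) (hsn : s ≤ n) :
    n * (n - 1).choose (s - 1) = n.choose s * s := by
  obtain ⟨m, rfl⟩ : ∃ m, n = m + 1 := ⟨n - 1, by omega⟩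
  obtain ⟨t, rfl⟩ : ∃ t, s = t + 1 := ⟨s - 1, by omega⟩
  simpa using Nat.add_one_mul_choose_eq m t

lemma svrg_expectation {M : Type*} [AddCommGroup M] [Module ℝ M] {n s : ℕ}
    (hs : 0 < s) (hsn : s ≤ n) (v : Fin n → M) :
    ∑ S ∈ Finset.univ.filter (fun S : Finset (Fin n) => S.card = s),
        (s : ℝ)⁻¹ • ∑ i ∈ S, v i
      = (((Finset.univ.filter fun S : Finset (Fin n) => S.card = s).card : ℝ)) •
          ((n : ℝ)⁻¹ • ∑ i, v i) := by
  have hn : 0 < n := lt_of_lt_of_le hs hsn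
  have hscalar : (s : ℝ)⁻¹ * (((n - 1).choose (s - 1) : ℕ) : ℝ)
      = (n.choose s : ℝ) * (n : ℝ)⁻¹ := by
    have hid := svrg_choose_id hs hsn
    have hs' : (s : ℝ) ≠ 0 := Nat.cast_ne_zero.mpr (by omega)
    have hn' : (n : ℝ) ≠ 0 := Nat.cast_ne_zero.mpr (by omega)
    field_simp
    have := congrArg (fun k : ℕ => (k : ℝ)) hid
    push_cast at this
    linarith [this]
  calc ∑ S ∈ Finset.univ.filter (fun S : Finset (Fin n) => S.card = s),
        (s : ℝ)⁻¹ • ∑ i ∈ S, v i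
      = (s : ℝ)⁻¹ • ∑ S ∈ Finset.univ.filter (fun S : Finset (Fin n) => S.card = s),
          ∑ i ∈ S, v i := (Finset.smul_sum).symm
    _ = (s : ℝ)⁻¹ • ((((n - 1).choose (s - 1) : ℕ) : ℝ) • ∑ i, v i) := by
        rw [svrg_sum_subsets hs v, Nat.cast_smul_eq_nsmul]
    _ = ((s : ℝ)⁻¹ * (((n - 1).choose (s - 1) : ℕ) : ℝ)) • ∑ i, v i := (smul_smul _ _ _)
    _ = ((n.choose s : ℝ) * (n : ℝ)⁻¹) • ∑ i, v i := by rw [hscalar]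
    _ = (((Finset.univ.filter fun S : Finset (Fin n) => S.card = s).card : ℝ)) •
          ((n : ℝ)⁻¹ • ∑ i, v i) := by rw [svrg_card_filter, smul_smul]

set_option maxHeartbeats 1000000 in
open scoped RealInnerProductSpace in
theorem svrg_variance_reduced_gradient_bound {d n : ℕ}
    (f : Fin n → EuclideanSpace ℝ (Fin d) → ℝ)
    (lam Lam : ℝ) (hlam : 0 < lam) (hll : lam ≤ Lam)
    (hdiff : ∀ i, ContDiff ℝ 2 (f i))
    (fbar : EuclideanSpace ℝ (Fin d) → ℝ)
    (hfbar : fbar = fun x => (n : ℝ)⁻¹ • ∑ i, f i x)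
    (fS : Finset (Fin n) → EuclideanSpace ℝ (Fin d) → ℝ)
    (hfS : ∀ S, fS S = fun x => ((S.card : ℝ))⁻¹ • ∑ i ∈ S, f i x)
    (hhess : ∀ S : Finset (Fin n), S.Nonempty → ∀ x v : EuclideanSpace ℝ (Fin d),
      lam * ‖v‖ ^ 2 ≤ fderiv ℝ (fun y => fderiv ℝ (fS S) y v) x v ∧
      fderiv ℝ (fun y => fderiv ℝ (fS S) y v) x v ≤ Lam * ‖v‖ ^ 2)
    (wstar : EuclideanSpace ℝ (Fin d)) (hmin : ∀ x, fbar wstar ≤ fbar x)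
    (s : ℕ) (hs : 0 < s) (hsn : s ≤ n)
    (x w : EuclideanSpace ℝ (Fin d)) :
    (((Finset.univ.filter fun S : Finset (Fin n) => S.card = s).card : ℝ))⁻¹ *
      ∑ S ∈ Finset.univ.filter (fun S : Finset (Fin n) => S.card = s),
        ‖gradient (fS S) x - gradient (fS S) w + gradient fbar w‖ ^ 2
    ≤ 4 * Lam * (fbar x - fbar wstar) + 4 * (Lam - lam) * (fbar w - fbar wstar) := by
  classical
  -- basic differentiability facts
  have hdiff1 : ∀ i, Differentiable ℝ (f i) := fun i => (hdiff i).differentiable (by norm_num)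
  have hfS2 : ∀ S : Finset (Fin n), ContDiff ℝ 2 (fS S) := by
    intro S; rw [hfS S]
    exact (ContDiff.sum fun i _ => hdiff i).const_smul _
  have hfbar2 : ContDiff ℝ 2 fbar := by
    rw [hfbar]; exact (ContDiff.sum fun i _ => hdiff i).const_smul _
  -- gradient formulas
  have hgradbar : ∀ y, gradient fbar y = (n : ℝ)⁻¹ • ∑ i, gradient (f i) y := by
    intro y; rw [hfbar]; exact svrg_grad_smul_sum Finset.univ f hdiff1 _ y
  have hmemF : ∀ S ∈ Finset.univ.filter (fun S : Finset (Fin n) => S.card = s), S.card = s :=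
    fun S hS => (Finset.mem_filter.mp hS).2
  have hne : ∀ S ∈ Finset.univ.filter (fun S : Finset (Fin n) => S.card = s), S.Nonempty := by
    intro S hS
    rw [← Finset.card_pos, hmemF S hS]; exact hs
  have hgradS : ∀ S ∈ Finset.univ.filter (fun S : Finset (Fin n) => S.card = s), ∀ y,
      gradient (fS S) y = (s : ℝ)⁻¹ • ∑ i ∈ S, gradient (f i) y := by
    intro S hS y
    rw [hfS S, hmemF S hS]
    exact svrg_grad_smul_sum S f hdiff1 _ y
  -- expectation identities
  have hfsum : ∀ y, ∑ S ∈ Finset.univ.filter (fun S : Finset (Fin n) => S.card = s), fS S y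
      = (((Finset.univ.filter fun S : Finset (Fin n) => S.card = s).card : ℝ)) * fbar y := by
    intro y
    have h1 : ∑ S ∈ Finset.univ.filter (fun S : Finset (Fin n) => S.card = s), fS S y
        = ∑ S ∈ Finset.univ.filter (fun S : Finset (Fin n) => S.card = s),
            (s : ℝ)⁻¹ • ∑ i ∈ S, f i y := by
      refine Finset.sum_congr rfl fun S hS => ?_
      rw [hfS S, hmemF S hS]
    rw [h1, svrg_expectation hs hsn (fun i => f i y), hfbar]
    simp [smul_eq_mul]
  have hGsum : ∀ y, ∑ S ∈ Finset.univ.filter (fun S : Finset (Fin n) => S.card = s),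
        gradient (fS S) y
      = (((Finset.univ.filter fun S : Finset (Fin n) => S.card = s).card : ℝ)) •
          gradient fbar y := by
    intro y
    have h1 : ∑ S ∈ Finset.univ.filter (fun S : Finset (Fin n) => S.card = s),
          gradient (fS S) y
        = ∑ S ∈ Finset.univ.filter (fun S : Finset (Fin n) => S.card = s),
            (s : ℝ)⁻¹ • ∑ i ∈ S, gradient (f i) y :=
      Finset.sum_congr rfl fun S hS => hgradS S hS y
    rw [h1, svrg_expectation hs hsn (fun i => gradient (f i) y), hgradbar y]
  -- abbreviations
  set F := Finset.univ.filter (fun S : Finset (Fin n) => S.card = s) with hF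
  set N : ℝ := (F.card : ℝ) with hN
  have hNpos : (0 : ℝ) < N := by
    rw [hN, hF, svrg_card_filter]
    exact_mod_cast Nat.choose_pos hsn
  -- gradient of fbar vanishes at the minimizer
  have hgrad0 : gradient fbar wstar = 0 := by
    have hloc : IsLocalMin fbar wstar := Filter.Eventually.of_forall hmin
    have h0 : fderiv ℝ fbar wstar = 0 := hloc.fderiv_eq_zero
    unfold gradient
    rw [h0, map_zero]
  -- per-sample quantities
  set a : Finset (Fin n) → EuclideanSpace ℝ (Fin d) :=
    fun S => gradient (fS S) x - gradient (fS S) wstar with ha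
  set c : Finset (Fin n) → EuclideanSpace ℝ (Fin d) :=
    fun S => gradient (fS S) w - gradient (fS S) wstar - lam • (w - wstar) with hc
  set μ : EuclideanSpace ℝ (Fin d) := gradient fbar w - lam • (w - wstar) with hμ
  -- mean of c
  have hcsum : ∑ S ∈ F, c S = N • μ := by
    simp only [hc, hμ]
    rw [Finset.sum_sub_distrib, Finset.sum_sub_distrib, hGsum w, hGsum wstar, hgrad0,
      Finset.sum_const, smul_zero, sub_zero, ← Nat.cast_smul_eq_nsmul ℝ, ← hN, smul_sub]
    module
  -- co-coercivity for fS S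
  have hcoA : ∀ S ∈ F, ‖a S‖ ^ 2
      ≤ 2 * Lam * (fS S x - fS S wstar - ⟪gradient (fS S) wstar, x - wstar⟫) := by
    intro S hS
    exact svrg_cocoercive (fS S) (hfS2 S) hlam.le hll (fun z v => hhess S (hne S hS) z v) x wstar
  -- co-coercivity for the shifted functions
  have hcoB : ∀ S ∈ F, ‖c S‖ ^ 2
      ≤ 2 * (Lam - lam) * ((fS S w - lam / 2 * ‖w‖ ^ 2) - (fS S wstar - lam / 2 * ‖wstar‖ ^ 2)
          - ⟪gradient (fS S) wstar - lam • wstar, w - wstar⟫) := by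
    intro S hS
    have hq2 : ContDiff ℝ 2 (fun z => fS S z - lam / 2 * ‖z‖ ^ 2) :=
      svrg_shift_contDiff (fS S) (hfS2 S) lam
    have hqh : ∀ z v : EuclideanSpace ℝ (Fin d), (0 : ℝ) * ‖v‖ ^ 2
          ≤ fderiv ℝ (fun y => fderiv ℝ (fun z => fS S z - lam / 2 * ‖z‖ ^ 2) y v) z v ∧
        fderiv ℝ (fun y => fderiv ℝ (fun z => fS S z - lam / 2 * ‖z‖ ^ 2) y v) z v
          ≤ (Lam - lam) * ‖v‖ ^ 2 := by
      intro z v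
      rw [svrg_shift_hess (fS S) (hfS2 S) lam z v]
      have h := hhess S (hne S hS) z v
      constructor
      · nlinarith [h.1]
      · nlinarith [h.2]
    have hkey := svrg_cocoercive (fun z => fS S z - lam / 2 * ‖z‖ ^ 2) hq2
      (le_refl (0 : ℝ)) (by linarith) hqh w wstar
    have hfS1 : Differentiable ℝ (fS S) := (hfS2 S).differentiable (by norm_num)
    rw [svrg_shift_grad (fS S) hfS1 lam w, svrg_shift_grad (fS S) hfS1 lam wstar] at hkey
    have hcc : gradient (fS S) w - lam • w - (gradient (fS S) wstar - lam • wstar) = c S := by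
      simp only [hc]
      rw [smul_sub]; abel
    rw [hcc] at hkey
    exact hkey
  -- decomposition of the variance-reduced gradient
  have hgdec : ∀ S : Finset (Fin n),
      gradient (fS S) x - gradient (fS S) w + gradient fbar w = a S - (c S - μ) := by
    intro S
    simp only [ha, hc, hμ]
    abel
  -- pointwise bound
  have hpt : ∀ S : Finset (Fin n),
      ‖gradient (fS S) x - gradient (fS S) w + gradient fbar w‖ ^ 2
        ≤ 2 * ‖a S‖ ^ 2 + 2 * ‖c S - μ‖ ^ 2 := by
    intro S
    rw [hgdec S]
    have h1 : ‖a S - (c S - μ)‖ ≤ ‖a S‖ + ‖c S - μ‖ := norm_sub_le _ _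
    nlinarith [h1, sq_nonneg (‖a S‖ - ‖c S - μ‖), norm_nonneg (a S - (c S - μ)),
      norm_nonneg (a S), norm_nonneg (c S - μ), sq_nonneg (‖a S‖ + ‖c S - μ‖)]
  -- sum the pointwise bounds
  have hsum1 : ∑ S ∈ F, ‖gradient (fS S) x - gradient (fS S) w + gradient fbar w‖ ^ 2
      ≤ 2 * ∑ S ∈ F, ‖a S‖ ^ 2 + 2 * ∑ S ∈ F, ‖c S - μ‖ ^ 2 := by
    calc ∑ S ∈ F, ‖gradient (fS S) x - gradient (fS S) w + gradient fbar w‖ ^ 2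
        ≤ ∑ S ∈ F, (2 * ‖a S‖ ^ 2 + 2 * ‖c S - μ‖ ^ 2) :=
          Finset.sum_le_sum fun S _ => hpt S
      _ = 2 * ∑ S ∈ F, ‖a S‖ ^ 2 + 2 * ∑ S ∈ F, ‖c S - μ‖ ^ 2 := by
          rw [Finset.sum_add_distrib, Finset.mul_sum, Finset.mul_sum]
  -- variance bound
  have hvar : ∑ S ∈ F, ‖c S - μ‖ ^ 2 ≤ ∑ S ∈ F, ‖c S‖ ^ 2 := svrg_var_le F c μ hcsum
  -- bound for the a-part
  have hsumA : ∑ S ∈ F, ‖a S‖ ^ 2 ≤ 2 * Lam * (N * (fbar x - fbar wstar)) := by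
    have h1 : ∑ S ∈ F, ‖a S‖ ^ 2
        ≤ ∑ S ∈ F, 2 * Lam * (fS S x - fS S wstar - ⟪gradient (fS S) wstar, x - wstar⟫) :=
      Finset.sum_le_sum hcoA
    have h2 : ∑ S ∈ F, ⟪gradient (fS S) wstar, x - wstar⟫ = 0 := by
      rw [← sum_inner, hGsum wstar, hgrad0, smul_zero, inner_zero_left]
    have h3 : ∑ S ∈ F, 2 * Lam * (fS S x - fS S wstar - ⟪gradient (fS S) wstar, x - wstar⟫)
        = 2 * Lam * (N * (fbar x - fbar wstar)) := by
      rw [← Finset.mul_sum, Finset.sum_sub_distrib, Finset.sum_sub_distrib, hfsum, hfsum, h2]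
      ring
    linarith [h1, h3.le]
  -- bound for the c-part
  have hsumB : ∑ S ∈ F, ‖c S‖ ^ 2 ≤ 2 * (Lam - lam) * (N * (fbar w - fbar wstar)) := by
    have h1 : ∑ S ∈ F, ‖c S‖ ^ 2 ≤ ∑ S ∈ F, 2 * (Lam - lam) *
        ((fS S w - lam / 2 * ‖w‖ ^ 2) - (fS S wstar - lam / 2 * ‖wstar‖ ^ 2)
          - ⟪gradient (fS S) wstar - lam • wstar, w - wstar⟫) :=
      Finset.sum_le_sum hcoB
    have h2 : ∑ S ∈ F, ⟪gradient (fS S) wstar - lam • wstar, w - wstar⟫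
        = N * (-(lam * ⟪wstar, w - wstar⟫)) := by
      rw [← sum_inner, Finset.sum_sub_distrib, hGsum wstar, hgrad0, smul_zero,
        Finset.sum_const, zero_sub, inner_neg_left, ← Nat.cast_smul_eq_nsmul ℝ, ← hN,
        smul_smul, real_inner_smul_left]
      ring
    have hnorm : ‖w - wstar‖ ^ 2 = ‖w‖ ^ 2 - 2 * ⟪w, wstar⟫ + ‖wstar‖ ^ 2 :=
      norm_sub_sq_real w wstar
    have hws : ⟪wstar, w - wstar⟫ = ⟪w, wstar⟫ - ‖wstar‖ ^ 2 := by
      rw [inner_sub_right, real_inner_self_eq_norm_sq, real_inner_comm]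
    have h3 : ∑ S ∈ F, ((fS S w - lam / 2 * ‖w‖ ^ 2) - (fS S wstar - lam / 2 * ‖wstar‖ ^ 2)
          - ⟪gradient (fS S) wstar - lam • wstar, w - wstar⟫)
        = N * ((fbar w - fbar wstar) - lam / 2 * ‖w - wstar‖ ^ 2) := by
      rw [Finset.sum_sub_distrib, Finset.sum_sub_distrib, Finset.sum_sub_distrib,
        Finset.sum_sub_distrib, hfsum, hfsum, h2, Finset.sum_const, Finset.sum_const,
        nsmul_eq_mul, nsmul_eq_mul, ← hN, hnorm, hws]
      ring
    have h4 : 2 * (Lam - lam) * (N * ((fbar w - fbar wstar) - lam / 2 * ‖w - wstar‖ ^ 2))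
        ≤ 2 * (Lam - lam) * (N * (fbar w - fbar wstar)) := by
      have hLl : 0 ≤ Lam - lam := by linarith
      have hnn : 0 ≤ lam / 2 * ‖w - wstar‖ ^ 2 := by positivity
      have hinner : N * (fbar w - fbar wstar - lam / 2 * ‖w - wstar‖ ^ 2)
          ≤ N * (fbar w - fbar wstar) :=
        mul_le_mul_of_nonneg_left (by linarith) hNpos.le
      exact mul_le_mul_of_nonneg_left hinner (by linarith)
    calc ∑ S ∈ F, ‖c S‖ ^ 2 ≤ _ := h1
      _ = 2 * (Lam - lam) * (N * ((fbar w - fbar wstar) - lam / 2 * ‖w - wstar‖ ^ 2)) := by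
          rw [← Finset.mul_sum, h3]
      _ ≤ 2 * (Lam - lam) * (N * (fbar w - fbar wstar)) := h4
  -- final assembly
  have htotal : ∑ S ∈ F, ‖gradient (fS S) x - gradient (fS S) w + gradient fbar w‖ ^ 2
      ≤ N * (4 * Lam * (fbar x - fbar wstar) + 4 * (Lam - lam) * (fbar w - fbar wstar)) := by
    have : 2 * (2 * Lam * (N * (fbar x - fbar wstar)))
        + 2 * (2 * (Lam - lam) * (N * (fbar w - fbar wstar)))
        = N * (4 * Lam * (fbar x - fbar wstar) + 4 * (Lam - lam) * (fbar w - fbar wstar)) := by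
      ring
    linarith [hsum1, hvar, hsumA, hsumB]
  rw [inv_mul_le_iff₀ hNpos]
  exact htotal
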